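/- Suppose the objective g : X → ℝ with maximizer x* satisfies g(x) ≥ g(x*) − β̂·‖x − x*‖^γ̂ for all x, and suppose at the time a cell P_{h,j} with center x_{h,j} is selected its bounds satisfy: U over the optimal cell dominates g(x*) (i.e., U_{h*,j*} + β̂·δ(h*)^γ̂ ≥ g(x*)), L_{h,j} ≤ g(x_{h,j}), selection gives U_{h,j} + β̂·δ(h)^γ̂ ≥ U_{h*,j*} + β̂·δ(h*)^γ̂, and expansion requires U_{h,j} − L_{h,j} ≤ β̂·δ(h)^γ̂. Then g(x*) − g(x_{h,j}) ≤ 2·β̂·δ(h)^γ̂, i.e., x_{h,j} ∈ J_h := { x : g(x) + 2β̂·δ(h)^γ̂ ≥ g(x*) }. -/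
import Mathlib


/-- valid expansions, Proposition 1 of StoROO, as an arithmetic implication:
if `g(x) ≥ g(x*) − β̂·δ(h*)^γ̂`-type bounds hold at selection and expansion time, then the
center of the expanded cell is `2β̂δ(h)^γ̂`-optimal. -/
theorem stmt10 {X : Type*} [NormedAddCommGroup X]
    (g : X → ℝ) (xstar : X) (βh γh : ℝ) (hβ : 0 < βh) (hγ : 0 < γh)
    (hreg : ∀ x : X, g x ≥ g xstar - βh * ‖x - xstar‖ ^ γh)
    (δh δhstar : ℝ) (hδh : 0 < δh) (hδhstar : 0 < δhstar)
    (xhj : X) (U L Ustar : ℝ)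
    -- the UCB over the optimal cell dominates g(x*)
    (hUstar : Ustar + βh * δhstar ^ γh ≥ g xstar)
    -- L is a valid lower confidence bound at the center of the selected cell
    (hL : L ≤ g xhj)
    -- the selected cell has the highest UCB, in particular it beats the optimal cell
    (hsel : U + βh * δh ^ γh ≥ Ustar + βh * δhstar ^ γh)
    -- the expansion condition
    (hexp : U - L ≤ βh * δh ^ γh) :
    g xstar - g xhj ≤ 2 * βh * δh ^ γh ∧ g xhj + 2 * βh * δh ^ γh ≥ g xstar := by
  constructor <;> nlinarith
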